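/- If G is a clique-Helly graph, then G is clique-convergent: there exist m < n such that K^m(G) is isomorphic to K^n(G). -/

import Mathlib

universe u

variable {V : Type u}

/-- A clique of `G` in the sense of the paper: a maximal complete subgraph,
represented as a finset of vertices. -/
def MaxClique (G : SimpleGraph V) (s : Finset V) : Prop :=
  G.IsClique (s : Set V) ∧ ∀ t : Finset V, G.IsClique (t : Set V) → s ⊆ t → s = t

/-- A pairwise-intersecting family of finsets. -/
def PairwiseIntersecting (Q : Set (Finset V)) : Prop :=
  ∀ q ∈ Q, ∀ r ∈ Q, ∃ v, v ∈ q ∧ v ∈ r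

/-- A clique of the clique graph `K(G)`: a maximal pairwise-intersecting family of
cliques of `G`. -/
def IsCliqueOfCliques (G : SimpleGraph V) (Q : Set (Finset V)) : Prop :=
  (∀ q ∈ Q, MaxClique G q) ∧ PairwiseIntersecting Q ∧
    ∀ Q' : Set (Finset V), Q ⊆ Q' → (∀ q ∈ Q', MaxClique G q) →
      PairwiseIntersecting Q' → Q' = Q

/-- A necktie: a clique of `K(G)` with empty total intersection. -/
def IsNecktie (G : SimpleGraph V) (Q : Set (Finset V)) : Prop :=
  IsCliqueOfCliques G Q ∧ ¬ ∃ v, ∀ q ∈ Q, v ∈ q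

/-- The star of a vertex: the family of cliques of `G` containing it. -/
def starOf (G : SimpleGraph V) (x : V) : Set (Finset V) :=
  {q | MaxClique G q ∧ x ∈ q}

/-- A vertex is normal when its star is a clique of `K(G)`. -/
def IsNormal (G : SimpleGraph V) (x : V) : Prop :=
  IsCliqueOfCliques G (starOf G x)

/-- A triangle: a complete subgraph with three vertices. -/
def IsTriangle (G : SimpleGraph V) (T : Finset V) : Prop :=
  G.IsClique (T : Set V) ∧ T.card = 3

/-- An inner triangle: a triangle that is a clique and such that each of its edges
lies in a triangle different from `T`. -/
def IsInnerTriangle [DecidableEq V] (G : SimpleGraph V) (T : Finset V) : Prop :=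
  MaxClique G T ∧ T.card = 3 ∧
    ∀ x ∈ T, ∀ y ∈ T, x ≠ y →
      ∃ T' : Finset V, IsTriangle G T' ∧ T' ≠ T ∧ T ∩ T' = ({x, y} : Finset V)

/-- `Q_T`: the family of cliques meeting the triangle `T` in at least two vertices. -/
def QT [DecidableEq V] (G : SimpleGraph V) (T : Finset V) : Set (Finset V) :=
  {q | MaxClique G q ∧ 2 ≤ (q ∩ T).card}

/-- Adjacency between two vertices of `K²(G)` (i.e. cliques of `K(G)`):
they are distinct and intersect. -/
def Adj2 (A B : Set (Finset V)) : Prop :=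
  A ≠ B ∧ ∃ q, q ∈ A ∧ q ∈ B

/-- `s` induces a 4-cycle in `G`. -/
def InducesC4 [DecidableEq V] (G : SimpleGraph V) (s : Finset V) : Prop :=
  ∃ a b c d : V, a ≠ b ∧ a ≠ c ∧ a ≠ d ∧ b ≠ c ∧ b ≠ d ∧ c ≠ d ∧
    s = ({a, b, c, d} : Finset V) ∧
    G.Adj a b ∧ G.Adj b c ∧ G.Adj c d ∧ G.Adj d a ∧ ¬ G.Adj a c ∧ ¬ G.Adj b d

/-- The octahedron, i.e. the complete tripartite graph `K_{2,2,2}`. -/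
def octahedron : SimpleGraph (Fin 3 × Fin 2) where
  Adj a b := a.1 ≠ b.1
  symm := ⟨fun _ _ h => h.symm⟩
  loopless := ⟨fun _ h => h rfl⟩

/-- The clique graph `K(G)`: the intersection graph of the cliques of `G`. -/
def cliqueGraph (G : SimpleGraph V) : SimpleGraph {q : Finset V // MaxClique G q} where
  Adj q r := q ≠ r ∧ ∃ v, v ∈ q.1 ∧ v ∈ r.1
  symm := ⟨fun _ _ h => ⟨h.1.symm, h.2.imp fun _ hv => ⟨hv.2, hv.1⟩⟩⟩
  loopless := ⟨fun _ h => h.1 rfl⟩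

/-- A graph is clique-Helly when its family of cliques has the Helly property. -/
def CliqueHelly {W : Type*} (H : SimpleGraph W) : Prop :=
  ∀ F : Set (Finset W), F.Nonempty → (∀ q ∈ F, MaxClique H q) →
    PairwiseIntersecting F → ∃ v, ∀ q ∈ F, v ∈ q

/-- Hereditary clique-Helly: every induced subgraph is clique-Helly. -/
def HereditaryCliqueHelly {W : Type*} (H : SimpleGraph W) : Prop :=
  ∀ s : Set W, CliqueHelly (SimpleGraph.induce s H)

/-- A finite graph packaged with its vertex type, to allow iterating `K`. -/
structure FGraph where
  V : Type u
  fin : Fintype V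
  G : SimpleGraph V

/-- The clique graph operator on packaged finite graphs. -/
noncomputable def FGraph.K (F : FGraph) : FGraph where
  V := {q : Finset F.V // MaxClique F.G q}
  fin := by
    haveI := F.fin
    classical
    exact Subtype.fintype _
  G := cliqueGraph F.G

/-- Iterated clique graphs: `iterK F n` packages `Kⁿ(G)`. -/
noncomputable def iterK (F : FGraph) : ℕ → FGraph
  | 0 => F
  | n + 1 => (iterK F n).K

section Helly

variable {W : Type*} [Fintype W] {H : SimpleGraph W}

lemma exists_maxClique_supset (H : SimpleGraph W) {s : Finset W}
    (hs : H.IsClique (s : Set W)) : ∃ q, MaxClique H q ∧ s ⊆ q := by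
  classical
  obtain ⟨q, hq, hmax⟩ := Set.Finite.exists_maximalFor Finset.card
    {t : Finset W | H.IsClique (t : Set W) ∧ s ⊆ t} (Set.toFinite _)
    ⟨s, hs, Finset.Subset.refl s⟩
  refine ⟨q, ⟨hq.1, fun t ht hqt => ?_⟩, hq.2⟩
  exact Finset.eq_of_subset_of_card_le hqt
    (hmax ⟨ht, hq.2.trans hqt⟩ (Finset.card_le_card hqt))

lemma clique_adj {q : Finset W} (hq : MaxClique H q) {x y : W}
    (hx : x ∈ q) (hy : y ∈ q) (hxy : x ≠ y) : H.Adj x y :=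
  hq.1 (Finset.mem_coe.mpr hx) (Finset.mem_coe.mpr hy) hxy

lemma maxClique_nonempty [Nonempty W] {q : Finset W} (hq : MaxClique H q) :
    q.Nonempty := by
  rcases q.eq_empty_or_nonempty with rfl | hne
  · obtain ⟨v⟩ := ‹Nonempty W›
    have h1 : H.IsClique (({v} : Finset W) : Set W) := by simp
    have := hq.2 {v} h1 (Finset.empty_subset _)
    exact absurd this.symm (Finset.singleton_ne_empty _)
  · exact hne

/-- The star of a vertex, as a finset of cliques. -/
noncomputable def starF (H : SimpleGraph W) (v : W) : Finset {q // MaxClique H q} :=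
  (Set.toFinite {q : {q // MaxClique H q} | v ∈ q.1}).toFinset

lemma mem_starF {v : W} {q : {q // MaxClique H q}} : q ∈ starF H v ↔ v ∈ q.1 := by
  simp [starF]

lemma cliqueGraph_adj {q r : {q // MaxClique H q}} :
    (cliqueGraph H).Adj q r ↔ q ≠ r ∧ ∃ v, v ∈ q.1 ∧ v ∈ r.1 := Iff.rfl

/-- In a clique-Helly graph, every clique of the clique graph is a star. -/
lemma cliqueK_eq_starF [Nonempty W] (h : CliqueHelly H)
    {S : Finset {q // MaxClique H q}} (hS : MaxClique (cliqueGraph H) S) :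
    ∃ v, S = starF H v := by
  classical
  obtain ⟨q0, hq0, -⟩ := exists_maxClique_supset H (s := (∅ : Finset W)) (by simp)
  have hSne : S.Nonempty := by
    rcases S.eq_empty_or_nonempty with rfl | h'
    · have hclq : (cliqueGraph H).IsClique
          ((({⟨q0, hq0⟩} : Finset {q // MaxClique H q}) : Set _)) := by simp
      have := hS.2 _ hclq (Finset.empty_subset _)
      exact absurd this.symm (Finset.singleton_ne_empty _)
    · exact h'
  set FS : Set (Finset W) :=
    Subtype.val '' ((S : Set {q // MaxClique H q})) with hFS
  have hFne : FS.Nonempty := by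
    obtain ⟨q1, hq1⟩ := hSne
    exact ⟨q1.1, Set.mem_image_of_mem _ (Finset.mem_coe.mpr hq1)⟩
  obtain ⟨v, hv⟩ := h FS hFne
    (by rintro _ ⟨q, hq, rfl⟩; exact q.2)
    (by
      rintro _ ⟨q, hq, rfl⟩ _ ⟨r, hr, rfl⟩
      by_cases hqr : q = r
      · subst hqr
        obtain ⟨w, hw⟩ := maxClique_nonempty q.2
        exact ⟨w, hw, hw⟩
      · obtain ⟨-, w, hw1, hw2⟩ :=
          cliqueGraph_adj.mp (hS.1 hq hr hqr)
        exact ⟨w, hw1, hw2⟩)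
  refine ⟨v, hS.2 _ ?_ ?_⟩
  · intro q hq r hr hqr
    exact cliqueGraph_adj.mpr ⟨hqr, v, mem_starF.1 (Finset.mem_coe.mp hq),
      mem_starF.1 (Finset.mem_coe.mp hr)⟩
  · intro q hq
    exact mem_starF.2 (hv q.1 ⟨q, hq, rfl⟩)

/-- The clique graph of a clique-Helly graph is clique-Helly. -/
lemma cliqueHelly_cliqueGraph [Nonempty W] (h : CliqueHelly H) :
    CliqueHelly (cliqueGraph H) := by
  classical
  intro 𝔉 h𝔉ne hcl hpi
  choose vtx hvtx using fun S (hS : S ∈ 𝔉) => cliqueK_eq_starF h (hcl S hS)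
  have hX : H.IsClique
      (((Set.toFinite {v : W | ∃ S, ∃ hS : S ∈ 𝔉, vtx S hS = v}).toFinset : Finset W) : Set W) := by
    rw [Set.Finite.coe_toFinset]
    rintro _ ⟨S, hS, rfl⟩ _ ⟨T, hT, rfl⟩ hne
    obtain ⟨q, hqS, hqT⟩ := hpi S hS T hT
    rw [hvtx S hS] at hqS
    rw [hvtx T hT] at hqT
    exact clique_adj q.2 (mem_starF.1 hqS) (mem_starF.1 hqT) hne
  obtain ⟨q, hq, hsub⟩ := exists_maxClique_supset H hX
  refine ⟨⟨q, hq⟩, fun S hS => ?_⟩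
  rw [hvtx S hS]
  exact mem_starF.2 (hsub (by rw [Set.Finite.mem_toFinset]; exact ⟨S, hS, rfl⟩))

/-- The second clique graph of a clique-Helly graph embeds into it as an
induced subgraph. -/
lemma exists_embedding [Nonempty W] (h : CliqueHelly H) :
    ∃ f : {S // MaxClique (cliqueGraph H) S} → W, Function.Injective f ∧
      ∀ A B : {S // MaxClique (cliqueGraph H) S},
        (cliqueGraph (cliqueGraph H)).Adj A B ↔ H.Adj (f A) (f B) := by
  classical
  choose f hf using fun A : {S // MaxClique (cliqueGraph H) S} => cliqueK_eq_starF h A.2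
  refine ⟨f, fun A B hAB => Subtype.ext (by rw [hf A, hf B, hAB]), fun A B => ?_⟩
  constructor
  · intro hadj
    obtain ⟨hne, q, hqA, hqB⟩ := cliqueGraph_adj.mp hadj
    have h1 : f A ∈ q.1 := mem_starF.1 (by rw [← hf A]; exact hqA)
    have h2 : f B ∈ q.1 := mem_starF.1 (by rw [← hf B]; exact hqB)
    have hfne : f A ≠ f B := fun e => hne (Subtype.ext (by rw [hf A, hf B, e]))
    exact clique_adj q.2 h1 h2 hfne
  · intro hadj
    have hpair : H.IsClique (({f A, f B} : Finset W) : Set W) := by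
      intro a ha b hb hab
      simp only [Finset.coe_insert, Finset.coe_singleton, Set.mem_insert_iff,
        Set.mem_singleton_iff] at ha hb
      rcases ha with rfl | rfl <;> rcases hb with rfl | rfl <;>
        first
          | exact absurd rfl hab
          | exact hadj
          | exact hadj.symm
    obtain ⟨q, hq, hsub⟩ := exists_maxClique_supset H hpair
    refine cliqueGraph_adj.mpr ⟨fun e => hadj.ne (congrArg f e), ⟨q, hq⟩, ?_, ?_⟩
    · rw [hf A]; exact mem_starF.2 (hsub (by simp))
    · rw [hf B]; exact mem_starF.2 (hsub (by simp))

/-- If the vertex type is subsingleton, there is exactly one clique. -/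
noncomputable def uniqueMaxClique [Subsingleton W] (H : SimpleGraph W) :
    Unique {q // MaxClique H q} := by
  classical
  have hcl : H.IsClique ((Finset.univ : Finset W) : Set W) :=
    fun a _ b _ hab => absurd (Subsingleton.elim a b) hab
  have hmax : MaxClique H Finset.univ :=
    ⟨hcl, fun t _ hsub => Finset.Subset.antisymm hsub (Finset.subset_univ t)⟩
  exact ⟨⟨⟨Finset.univ, hmax⟩⟩,
    fun q => Subtype.ext (q.2.2 Finset.univ hcl (Finset.subset_univ _))⟩

end Helly

theorem stmt17 {V : Type u} [Fintype V] (G : SimpleGraph V)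
    (h : CliqueHelly G) :
    ∃ m n : ℕ, m < n ∧
      Nonempty ((iterK ⟨V, inferInstance, G⟩ m).G ≃g (iterK ⟨V, inferInstance, G⟩ n).G) := by
  classical
  by_cases hV : Nonempty V
  · -- main case: nonempty vertex set
    have P : ∀ n, Nonempty (iterK ⟨V, inferInstance, G⟩ n).V ∧
        CliqueHelly (iterK ⟨V, inferInstance, G⟩ n).G := by
      intro n
      induction n with
      | zero => exact ⟨hV, h⟩
      | succ n ih =>
        haveI := (iterK ⟨V, inferInstance, G⟩ n).fin
        haveI := ih.1
        refine ⟨?_, ?_⟩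
        · obtain ⟨q, hq, -⟩ := exists_maxClique_supset
            (iterK ⟨V, inferInstance, G⟩ n).G (s := ∅) (by simp)
          exact ⟨⟨q, hq⟩⟩
        · exact cliqueHelly_cliqueGraph ih.2
    have emb : ∀ n, ∃ f : (iterK ⟨V, inferInstance, G⟩ (n+2)).V →
        (iterK ⟨V, inferInstance, G⟩ n).V, Function.Injective f ∧
        ∀ A B, (iterK ⟨V, inferInstance, G⟩ (n+2)).G.Adj A B ↔
          (iterK ⟨V, inferInstance, G⟩ n).G.Adj (f A) (f B) := by
      intro n
      haveI := (iterK ⟨V, inferInstance, G⟩ n).fin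
      haveI := (P n).1
      exact exists_embedding (P n).2
    let c : ℕ → ℕ := fun n => @Fintype.card (iterK ⟨V, inferInstance, G⟩ n).V
      (iterK ⟨V, inferInstance, G⟩ n).fin
    have hdec : ∀ n, c (n+2) ≤ c n := by
      intro n
      obtain ⟨f, hinj, -⟩ := emb n
      exact @Fintype.card_le_of_injective _ _ (iterK ⟨V, inferInstance, G⟩ (n+2)).fin
        (iterK ⟨V, inferInstance, G⟩ n).fin f hinj
    have hstab : ∃ n, c (2*n+2) = c (2*n) := by
      by_contra hc
      push_neg at hc
      have hlt : ∀ n, c (2*n+2) < c (2*n) :=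
        fun n => lt_of_le_of_ne (hdec (2*n)) (hc n)
      have key : ∀ n, c (2*n) + n ≤ c 0 := by
        intro n
        induction n with
        | zero => simp
        | succ n ih =>
          have h1 := hlt n
          have e : 2*(n+1) = 2*n+2 := by ring
          rw [e]
          omega
      have := key (c 0 + 1)
      omega
    obtain ⟨n, hn⟩ := hstab
    obtain ⟨f, hinj, hiff⟩ := emb (2*n)
    have hbij : Function.Bijective f :=
      (@Fintype.bijective_iff_injective_and_card _ _
        (iterK ⟨V, inferInstance, G⟩ (2*n+2)).fin
        (iterK ⟨V, inferInstance, G⟩ (2*n)).fin f).2 ⟨hinj, hn⟩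
    refine ⟨2*n, 2*n+2, by omega, ⟨SimpleGraph.Iso.symm ⟨Equiv.ofBijective f hbij, ?_⟩⟩⟩
    intro a b
    exact (hiff a b).symm
  · -- empty vertex set: K(G) and K²(G) both have a unique vertex
    haveI : IsEmpty V := not_nonempty_iff.mp hV
    haveI i1 : Unique (iterK ⟨V, inferInstance, G⟩ 1).V := uniqueMaxClique G
    haveI := (iterK ⟨V, inferInstance, G⟩ 1).fin
    haveI i2 : Unique (iterK ⟨V, inferInstance, G⟩ 2).V :=
      uniqueMaxClique (iterK ⟨V, inferInstance, G⟩ 1).G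
    refine ⟨1, 2, by omega, ⟨⟨Equiv.ofUnique _ _, ?_⟩⟩⟩
    intro a b
    rw [Subsingleton.elim a b]
    constructor <;> intro hadj <;> exact absurd hadj (SimpleGraph.irrefl _)
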